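/- Let R be an F-finite F-pure Noetherian ring of prime characteristic p and let I = {I_n} be an F-pure filtration. Then the Rees algebra R(I) = ⊕_{n≥0} I_n T^n is F-pure. -/

import Mathlib

set_option maxHeartbeats 1000000
set_option synthInstance.maxHeartbeats 400000

noncomputable section

section Core
variable {R : Type*} [CommRing R]

/-- A Frobenius splitting: identifying `R^{1/p}` with `R` via `p`-th roots, an additive map
`φ : R^{1/p} → R` which is `R`-linear (`φ(a^p b^{1/p}) = a φ(b^{1/p})`) and splits the
inclusion `R ⊆ R^{1/p}` (equivalently `φ 1 = 1`). -/
def IsFrobeniusSplitting (p : ℕ) (φ : R → R) : Prop :=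
  (∀ a b : R, φ (a + b) = φ a + φ b) ∧ (∀ a b : R, φ (a ^ p * b) = a * φ b) ∧ φ 1 = 1

/-- A ring is `F`-split (`F`-pure in the `F`-finite case) if Frobenius splits. -/
def IsFSplitRing (p : ℕ) (A : Type*) [CommRing A] : Prop :=
  ∃ φ : A → A, IsFrobeniusSplitting p φ

/-- `A` is `F`-finite: `A` is a finitely generated module over its subring of `p`-th powers. -/
def IsFFiniteRing (p : ℕ) (A : Type*) [CommRing A] : Prop :=
  ∃ (n : ℕ) (g : Fin n → A), ∀ x : A, ∃ c : Fin n → A, x = ∑ i, c i ^ p * g i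

/-- A filtration of ideals. -/
def IsIdealFiltration (I : ℕ → Ideal R) : Prop :=
  I 0 = ⊤ ∧ (∀ n, I (n + 1) ≤ I n) ∧ ∀ m n, I m * I n ≤ I (m + n)

/-- An `F`-pure filtration. -/
def IsFPureFiltration (p : ℕ) (I : ℕ → Ideal R) : Prop :=
  IsIdealFiltration I ∧ ∃ φ : R → R, IsFrobeniusSplitting p φ ∧
    ∀ n : ℕ, ∀ x ∈ I (n * p + 1), φ x ∈ I (n + 1)

/-- The Frobenius power `J^{[p]}` of an ideal. -/
def Ideal.frobPow (p : ℕ) (J : Ideal R) : Ideal R :=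
  Ideal.span ((fun a => a ^ p) '' (J : Set R))

/-- The `n`-th symbolic power `I^{(n)}`. -/
def Ideal.symbPow (I : Ideal R) (n : ℕ) : Ideal R where
  carrier := {r : R | ∃ s : R, (∀ P ∈ I.minimalPrimes, s ∉ P) ∧ s * r ∈ I ^ n}
  zero_mem' :=
    ⟨1, fun P hP h1 => hP.1.1.ne_top ((Ideal.eq_top_iff_one P).mpr h1), by simp⟩
  add_mem' := by
    rintro a b ⟨s, hs, hsa⟩ ⟨t, ht, htb⟩
    refine ⟨s * t, fun P hP hst => ((hP.1.1.mem_or_mem hst).elim (hs P hP) (ht P hP)), ?_⟩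
    have h1 : (s * t) * (a + b) = t * (s * a) + s * (t * b) := by ring
    rw [h1]
    exact (I ^ n).add_mem (Ideal.mul_mem_left _ _ hsa) (Ideal.mul_mem_left _ _ htb)
  smul_mem' := by
    rintro c x ⟨s, hs, hsx⟩
    refine ⟨s, hs, ?_⟩
    have h1 : s * (c • x) = c * (s * x) := by
      simp only [smul_eq_mul]; ring
    rw [h1]
    exact Ideal.mul_mem_left _ _ hsx

end Core

section Rees
variable {R : Type*} [CommRing R]

/-- The Rees algebra `⊕ₙ Iₙ Tⁿ ⊆ R[T]` of a filtration. -/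
def filtrationRees (I : ℕ → Ideal R) (hI : IsIdealFiltration I) : Subalgebra R (Polynomial R) where
  carrier := {f : Polynomial R | ∀ n, f.coeff n ∈ I n}
  add_mem' := by
    intro f g hf hg n
    rw [Polynomial.coeff_add]
    exact (I n).add_mem (hf n) (hg n)
  mul_mem' := by
    intro f g hf hg n
    rw [Polynomial.coeff_mul]
    refine Ideal.sum_mem _ fun x hx => ?_
    have h := hI.2.2 x.1 x.2 (Ideal.mul_mem_mul (hf x.1) (hg x.2))
    rwa [Finset.HasAntidiagonal.mem_antidiagonal.mp hx] at h
  one_mem' := by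
    intro n
    cases n with
    | zero => simp [hI.1]
    | succ n => simp [Polynomial.coeff_one]
  zero_mem' := by intro n; simp
  algebraMap_mem' := by
    intro r n
    cases n with
    | zero => simp [hI.1]
    | succ n => simp [Polynomial.coeff_C]

/-- The ideal `⊕ₙ I_{n+1} Tⁿ` of the Rees algebra; the quotient is the associated graded
algebra `gr(𝕀) = ⊕ₙ Iₙ/I_{n+1}`. -/
def grFiltIdeal (I : ℕ → Ideal R) (hI : IsIdealFiltration I) : Ideal (filtrationRees I hI) where
  carrier := {f | ∀ n, (f : Polynomial R).coeff n ∈ I (n + 1)}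
  add_mem' := by
    rintro f g hf hg n
    have h : ((f + g : filtrationRees I hI) : Polynomial R) = (f : Polynomial R) + g := rfl
    rw [h, Polynomial.coeff_add]
    exact (I (n + 1)).add_mem (hf n) (hg n)
  zero_mem' := by
    intro n
    have h : ((0 : filtrationRees I hI) : Polynomial R) = 0 := rfl
    rw [h]; simp
  smul_mem' := by
    intro c f hf n
    change ((c : Polynomial R) * (f : Polynomial R)).coeff n ∈ I (n + 1)
    rw [Polynomial.coeff_mul]
    refine Ideal.sum_mem _ fun x hx => ?_
    have h2 := hI.2.2 x.1 (x.2 + 1) (Ideal.mul_mem_mul (c.2 x.1) (hf x.2))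
    have hx' : x.1 + (x.2 + 1) = n + 1 := by
      have := Finset.HasAntidiagonal.mem_antidiagonal.mp hx; omega
    rwa [hx'] at h2

end Rees


section Aux
open Polynomial

variable {R : Type*} [CommRing R]

/-- The coefficientwise application of `φ` in degrees divisible by `p`. -/
def phiPoly (p : ℕ) (φ : R → R) (f : R[X]) : R[X] :=
  ∑ n ∈ Finset.range (f.natDegree + 1), Polynomial.C (φ (f.coeff (n * p))) * Polynomial.X ^ n

lemma phiPoly_coeff {p : ℕ} (hp0 : 0 < p) {φ : R → R} (hφ0 : φ 0 = 0) (f : R[X]) (n : ℕ) :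
    (phiPoly p φ f).coeff n = φ (f.coeff (n * p)) := by
  rw [phiPoly, Polynomial.finset_sum_coeff]
  simp only [Polynomial.coeff_C_mul, Polynomial.coeff_X_pow, mul_ite, mul_one, mul_zero]
  rw [Finset.sum_ite_eq (Finset.range (f.natDegree + 1)) n]
  split_ifs with h
  · rfl
  · have hn : f.natDegree < n := by
      simp only [Finset.mem_range] at h; omega
    have : f.natDegree < n * p := lt_of_lt_of_le hn (Nat.le_mul_of_pos_right n hp0)
    rw [Polynomial.coeff_eq_zero_of_natDegree_lt this, hφ0]

lemma IsFrobeniusSplitting.map_zero {p : ℕ} {φ : R → R}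
    (hφ : IsFrobeniusSplitting p φ) : φ 0 = 0 := by
  have h := hφ.1 0 0
  simp only [add_zero] at h
  exact add_eq_right.mp h.symm

lemma phiPoly_mul {p : ℕ} (hp : p.Prime) [CharP R p] {φ : R → R}
    (hφ : IsFrobeniusSplitting p φ) (a b : R[X]) :
    phiPoly p φ (a ^ p * b) = a * phiPoly p φ b := by
  haveI := Fact.mk hp
  induction a using Polynomial.induction_on' with
  | add q r hq hr =>
    rw [add_pow_char, add_mul, add_mul]
    ext n
    rw [Polynomial.coeff_add, phiPoly_coeff hp.pos hφ.map_zero, Polynomial.coeff_add, hφ.1,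
      ← phiPoly_coeff hp.pos hφ.map_zero (q ^ p * b), ← phiPoly_coeff hp.pos hφ.map_zero (r ^ p * b),
      hq, hr]
  | monomial m c =>
    ext n
    rw [phiPoly_coeff hp.pos hφ.map_zero, Polynomial.monomial_pow]
    rcases le_or_gt m n with h | h
    · obtain ⟨d, rfl⟩ : ∃ d, n = d + m := ⟨n - m, by omega⟩
      have h1 : (d + m) * p = d * p + m * p := by ring
      rw [h1, Polynomial.coeff_monomial_mul, hφ.2.1, Polynomial.coeff_monomial_mul,
        phiPoly_coeff hp.pos hφ.map_zero]
    · have h1 : ((monomial (m * p)) (c ^ p) * b).coeff (n * p) = 0 := by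
        rw [← Polynomial.C_mul_X_pow_eq_monomial, mul_assoc, Polynomial.coeff_C_mul,
          Polynomial.X_pow_mul, Polynomial.coeff_mul_X_pow']
        have : ¬ m * p ≤ n * p := by
          intro hle
          exact absurd (Nat.le_of_mul_le_mul_right hle hp.pos) (not_le.mpr h)
        rw [if_neg this, mul_zero]
      have h2 : ((monomial m) c * phiPoly p φ b).coeff n = 0 := by
        rw [← Polynomial.C_mul_X_pow_eq_monomial, mul_assoc, Polynomial.coeff_C_mul,
          Polynomial.X_pow_mul, Polynomial.coeff_mul_X_pow', if_neg (not_le.mpr h), mul_zero]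
      rw [h1, h2, hφ.map_zero]

lemma IsIdealFiltration.antitone {I : ℕ → Ideal R} (hI : IsIdealFiltration I) :
    ∀ {m n : ℕ}, m ≤ n → I n ≤ I m := by
  intro m n h
  induction n with
  | zero => simp_all
  | succ k ih =>
    rcases Nat.lt_or_ge m (k + 1) with h' | h'
    · exact le_trans (hI.2.1 k) (ih (by omega))
    · have : m = k + 1 := by omega
      subst this; exact le_rfl

end Aux

/-- The Rees algebra of an `F`-pure filtration on an `F`-finite `F`-pure
Noetherian ring of characteristic `p` is `F`-pure. -/
theorem isFSplitRing_filtrationRees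
    {R : Type*} [CommRing R] [IsNoetherianRing R]
    (p : ℕ) (hp : p.Prime) [CharP R p]
    (hFF : IsFFiniteRing p R) (hFP : IsFSplitRing p R)
    (I : ℕ → Ideal R) (hI : IsIdealFiltration I)
    (hFPfil : IsFPureFiltration p I) :
    IsFSplitRing p (filtrationRees I hI) := by
  classical
  obtain ⟨hIfil, φ, hφ, hφI⟩ := hFPfil
  have hp0 := hp.pos
  have hφ0 := hφ.map_zero
  -- membership of phiPoly in the Rees algebra
  have hmem : ∀ f : Polynomial R, (∀ n, f.coeff n ∈ I n) →
      ∀ n, (phiPoly p φ f).coeff n ∈ I n := by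
    intro f hf n
    rw [phiPoly_coeff hp0 hφ0]
    cases n with
    | zero => simp [hI.1]
    | succ m =>
      have h1 : (m + 1) * p ≥ m * p + 1 := by nlinarith [hp.two_le]
      have h2 : f.coeff ((m + 1) * p) ∈ I (m * p + 1) :=
        hI.antitone h1 (hf ((m + 1) * p))
      exact hφI m _ h2
  refine ⟨fun f => ⟨phiPoly p φ (f : Polynomial R), hmem _ f.2⟩, ?_, ?_, ?_⟩
  · intro a b
    apply Subtype.ext
    show phiPoly p φ ((a : Polynomial R) + b) = phiPoly p φ a + phiPoly p φ b
    ext n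
    rw [phiPoly_coeff hp0 hφ0, Polynomial.coeff_add, Polynomial.coeff_add,
      phiPoly_coeff hp0 hφ0, phiPoly_coeff hp0 hφ0, hφ.1]
  · intro a b
    apply Subtype.ext
    show phiPoly p φ ((a : Polynomial R) ^ p * b) = (a : Polynomial R) * phiPoly p φ b
    exact phiPoly_mul hp hφ _ _
  · apply Subtype.ext
    show phiPoly p φ (1 : Polynomial R) = 1
    ext n
    rw [phiPoly_coeff hp0 hφ0]
    cases n with
    | zero => simpa using hφ.2.2
    | succ m =>
      have h1 : (m + 1) * p ≠ 0 := by positivity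
      rw [Polynomial.coeff_one, if_neg h1, hφ0, Polynomial.coeff_one, if_neg (by omega)]
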